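/- Let (X, d) be a pseudometric space and let v : X →₀ ℤ be a finitely supported integer-valued function on X whose coefficients sum to zero. Then the Graev seminorm D(v), computed as an infimum over representations v = Σᵢ cᵢ·(δ_{xᵢ} − δ_{yᵢ}) with integer coefficients cᵢ ∈ ℤ, equals the analogous infimum inf { Σᵢ |cᵢ|·d(xᵢ, yᵢ) : v = Σᵢ cᵢ·(δ_{xᵢ} − δ_{yᵢ}) } taken over representations with real coefficients cᵢ ∈ ℝ, where v is viewed (via the coefficient embedding ℤ → ℝ) as an element of the free real vector space X →₀ ℝ. -/

import Mathlib

/-- The Graev seminorm on the free abelian group over a pseudometric space `X`,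
computed with integer coefficients. -/
noncomputable def graevSeminorm {X : Type*} [PseudoMetricSpace X] (v : X →₀ ℤ) : ℝ :=
  sInf { r : ℝ | ∃ (k : ℕ) (c : Fin k → ℤ) (x y : Fin k → X),
    v = ∑ i, c i • (Finsupp.single (x i) (1 : ℤ) - Finsupp.single (y i) (1 : ℤ)) ∧
    r = ∑ i, |(c i : ℝ)| * dist (x i) (y i) }

/-- The analogous infimum computed with real coefficients, on the free real vector
space over `X`. -/
noncomputable def graevSeminormReal {X : Type*} [PseudoMetricSpace X] (v : X →₀ ℝ) : ℝ :=
  sInf { r : ℝ | ∃ (k : ℕ) (c : Fin k → ℝ) (x y : Fin k → X),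
    v = ∑ i, c i • (Finsupp.single (x i) (1 : ℝ) - Finsupp.single (y i) (1 : ℝ)) ∧
    r = ∑ i, |c i| * dist (x i) (y i) }

section GraevAux

namespace GraevAux

open Finsupp Finset
attribute [local instance] Classical.propDecidable
set_option linter.unusedSectionVars false
set_option maxHeartbeats 1000000

variable {X : Type*} [PseudoMetricSpace X]

lemma sum_rep_apply {k : ℕ} (c : Fin k → ℝ) (x y : Fin k → X) (p : X) :
    (∑ i, c i • (Finsupp.single (x i) (1:ℝ) - Finsupp.single (y i) 1) : X →₀ ℝ) p
      = ∑ i, c i * ((if x i = p then (1:ℝ) else 0) - (if y i = p then 1 else 0)) := by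
  rw [Finsupp.finset_sum_apply]
  refine Finset.sum_congr rfl fun i _ => ?_
  simp [Finsupp.single_apply, mul_sub]

lemma mapRange_rep {k : ℕ} (m : Fin k → ℤ) (x y : Fin k → X) :
    Finsupp.mapRange (fun z : ℤ => (z:ℝ)) Int.cast_zero
        (∑ i, m i • (Finsupp.single (x i) (1:ℤ) - Finsupp.single (y i) 1))
      = ∑ i, (m i : ℝ) • (Finsupp.single (x i) (1:ℝ) - Finsupp.single (y i) 1) := by
  ext p
  rw [Finsupp.mapRange_apply, Finsupp.finset_sum_apply, Finsupp.finset_sum_apply]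
  push_cast
  refine Finset.sum_congr rfl fun i _ => ?_
  simp [Finsupp.single_apply, apply_ite (fun z : ℤ => (z:ℝ)), mul_sub]

lemma exists_leaf {k : ℕ} (x y : Fin k → X) (F : Finset (Fin k)) (hne : F.Nonempty)
    (hxy : ∀ i ∈ F, x i ≠ y i)
    (hind : LinearIndependent ℝ
      (fun j : F => (Finsupp.single (x j) (1:ℝ) - Finsupp.single (y j) 1))) :
    ∃ i₀ ∈ F, ∃ p : X, (x i₀ = p ∨ y i₀ = p) ∧
      ∀ j ∈ F, (x j = p ∨ y j = p) → j = i₀ := by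
  by_contra hcon
  push_neg at hcon
  set V : Finset X := F.image x ∪ F.image y with hV
  -- every vertex of V is incident to at least two edges
  have hdeg : ∀ p ∈ V, 2 ≤ (F.filter (fun j => x j = p ∨ y j = p)).card := by
    intro p hp
    have hinc : ∃ i₀ ∈ F, x i₀ = p ∨ y i₀ = p := by
      simp only [hV, Finset.mem_union, Finset.mem_image] at hp
      rcases hp with ⟨i, hi, hxi⟩ | ⟨i, hi, hyi⟩
      exacts [⟨i, hi, Or.inl hxi⟩, ⟨i, hi, Or.inr hyi⟩]
    obtain ⟨i₀, hi₀F, hi₀p⟩ := hinc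
    obtain ⟨j, hjF, hjp, hji⟩ := hcon i₀ hi₀F p hi₀p
    have hsub : ({j, i₀} : Finset (Fin k)) ⊆ F.filter (fun j => x j = p ∨ y j = p) := by
      intro a ha
      simp only [Finset.mem_insert, Finset.mem_singleton] at ha
      rcases ha with rfl | rfl <;> simp [Finset.mem_filter, hjF, hjp, hi₀F, hi₀p]
    calc 2 = ({j, i₀} : Finset (Fin k)).card := by rw [Finset.card_insert_of_notMem (by simp [hji]), Finset.card_singleton]
    _ ≤ _ := Finset.card_le_card hsub
  -- double counting: 2 * V.card ≤ 2 * F.card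
  have hcount : V.card ≤ F.card := by
    have h1 : 2 * V.card ≤ ∑ p ∈ V, (F.filter (fun j => x j = p ∨ y j = p)).card := by
      rw [two_mul]
      calc V.card + V.card = ∑ _p ∈ V, 2 := by simp [two_mul, Finset.sum_const, mul_comm]
      _ ≤ _ := Finset.sum_le_sum hdeg
    have h2 : ∑ p ∈ V, (F.filter (fun j => x j = p ∨ y j = p)).card
        = ∑ j ∈ F, (V.filter (fun p => x j = p ∨ y j = p)).card := by
      simp only [Finset.card_filter]
      rw [Finset.sum_comm]
    have h3 : ∀ j ∈ F, (V.filter (fun p => x j = p ∨ y j = p)).card = 2 := by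
      intro j hj
      have : V.filter (fun p => x j = p ∨ y j = p) = {x j, y j} := by
        ext p
        simp only [Finset.mem_filter, Finset.mem_insert, Finset.mem_singleton]
        constructor
        · rintro ⟨-, h | h⟩ <;> simp [h.symm]
        · rintro (rfl | rfl)
          · exact ⟨by simp [hV, Finset.mem_union, Finset.mem_image]; exact Or.inl ⟨j, hj, rfl⟩, Or.inl rfl⟩
          · exact ⟨by simp [hV, Finset.mem_union, Finset.mem_image]; exact Or.inr ⟨j, hj, rfl⟩, Or.inr rfl⟩
      rw [this, Finset.card_insert_of_notMem (by simp [hxy j hj]), Finset.card_singleton]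
    have h4 : ∑ j ∈ F, (V.filter (fun p => x j = p ∨ y j = p)).card = 2 * F.card := by
      rw [Finset.sum_congr rfl h3]; simp [mul_comm]
    omega
  -- independence gives F.card + 1 ≤ V.card
  have hbig : F.card + 1 ≤ V.card := by
    obtain ⟨i₁, hi₁⟩ := hne
    have hp₀V : x i₁ ∈ V := by
      simp only [hV, Finset.mem_union, Finset.mem_image]; exact Or.inl ⟨i₁, hi₁, rfl⟩
    set u : Fin k → (X →₀ ℝ) := fun i => Finsupp.single (x i) (1:ℝ) - Finsupp.single (y i) 1 with hu
    -- the total-sum functional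
    let L : (X →₀ ℝ) →ₗ[ℝ] ℝ := Finsupp.lsum ℝ (fun _ => LinearMap.id)
    have hL : ∀ p : X, L (Finsupp.single p 1) = 1 := by intro p; simp [L]
    have hLu : ∀ i, L (u i) = 0 := by
      intro i
      have : u i = Finsupp.single (x i) (1:ℝ) - Finsupp.single (y i) 1 := rfl
      rw [this, map_sub, hL, hL, sub_self]
    have hnotmem : Finsupp.single (x i₁) (1:ℝ) ∉
        Submodule.span ℝ (Set.range (fun j : F => u j)) := by
      intro hmem
      have hker : Submodule.span ℝ (Set.range (fun j : F => u j)) ≤ LinearMap.ker L := by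
        rw [Submodule.span_le]
        rintro _ ⟨j, rfl⟩
        simp [LinearMap.mem_ker, hLu]
      have := hker hmem
      rw [LinearMap.mem_ker, hL] at this
      exact one_ne_zero this
    have hindo : LinearIndependent ℝ
        (fun o : Option F => Option.casesOn' o (Finsupp.single (x i₁) (1:ℝ)) (fun j : F => u j)) :=
      hind.option hnotmem
    -- all vectors lie in the span of the singles over V
    set S : Finset (X →₀ ℝ) := V.image (fun p => Finsupp.single p (1:ℝ)) with hS
    have hsingle_mem : ∀ p ∈ V, Finsupp.single p (1:ℝ) ∈ Submodule.span ℝ (S : Set (X →₀ ℝ)) := by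
      intro p hp
      exact Submodule.subset_span (by simp [hS]; exact ⟨p, hp, rfl⟩)
    have hmem : ∀ o : Option F,
        Option.casesOn' o (Finsupp.single (x i₁) (1:ℝ)) (fun j : F => u j)
          ∈ Submodule.span ℝ (S : Set (X →₀ ℝ)) := by
      rintro (_ | j)
      · exact hsingle_mem _ hp₀V
      · have hxV : x j ∈ V := by
          simp only [hV, Finset.mem_union, Finset.mem_image]; exact Or.inl ⟨j, j.2, rfl⟩
        have hyV : y j ∈ V := by
          simp only [hV, Finset.mem_union, Finset.mem_image]; exact Or.inr ⟨j, j.2, rfl⟩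
        exact sub_mem (hsingle_mem _ hxV) (hsingle_mem _ hyV)
    have hspanle : Submodule.span ℝ (Set.range (fun o : Option F =>
        Option.casesOn' o (Finsupp.single (x i₁) (1:ℝ)) (fun j : F => u j)))
        ≤ Submodule.span ℝ (S : Set (X →₀ ℝ)) := by
      rw [Submodule.span_le]
      rintro _ ⟨o, rfl⟩
      exact hmem o
    have hcard : Fintype.card (Option F) = Module.finrank ℝ (Submodule.span ℝ
        (Set.range (fun o : Option F =>
          Option.casesOn' o (Finsupp.single (x i₁) (1:ℝ)) (fun j : F => u j)))) :=
      (finrank_span_eq_card hindo).symm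
    have hrank := Submodule.finrank_mono hspanle
    have hrank2 : Module.finrank ℝ (Submodule.span ℝ (S : Set (X →₀ ℝ))) ≤ V.card :=
      le_trans (finrank_span_finset_le_card S) Finset.card_image_le
    simp only [Fintype.card_option, Fintype.card_coe] at hcard
    omega
  omega

lemma perturb {k : ℕ} (c δ : Fin k → ℝ) (x y : Fin k → X)
    (hsupp : ∀ i, c i ∈ (⊥ : Subring ℝ) → δ i = 0)
    (hδne : ∃ i, δ i ≠ 0)
    (hδ0 : (∑ i, δ i • (Finsupp.single (x i) (1:ℝ) - Finsupp.single (y i) 1) : X →₀ ℝ) = 0)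
    (hA : ∑ i, (if 0 < c i then (1:ℝ) else -1) * δ i * dist (x i) (y i) ≤ 0) :
    ∃ c₂ : Fin k → ℝ,
      (∑ i, c₂ i • (Finsupp.single (x i) (1:ℝ) - Finsupp.single (y i) 1) : X →₀ ℝ)
        = ∑ i, c i • (Finsupp.single (x i) (1:ℝ) - Finsupp.single (y i) 1) ∧
      ∑ i, |c₂ i| * dist (x i) (y i) ≤ ∑ i, |c i| * dist (x i) (y i) ∧
      (Finset.univ.filter (fun i => c₂ i ∉ (⊥ : Subring ℝ))).card
        < (Finset.univ.filter (fun i => c i ∉ (⊥ : Subring ℝ))).card := by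
  classical
  set s : Fin k → ℝ := fun i => if 0 < c i then (1:ℝ) else -1 with hs
  set Fδ : Finset (Fin k) := Finset.univ.filter (fun i => δ i ≠ 0) with hFδ
  have hFδne : Fδ.Nonempty := by
    obtain ⟨i, hi⟩ := hδne; exact ⟨i, by simp [hFδ, hi]⟩
  have hcint : ∀ i ∈ Fδ, c i ∉ (⊥ : Subring ℝ) := by
    intro i hi hc
    have := hsupp i hc
    simp [hFδ, this] at hi
  have hfl : ∀ i ∈ Fδ, ((⌊c i⌋ : ℝ) < c i) := by
    intro i hi
    rcases lt_or_eq_of_le (Int.floor_le (c i)) with h | h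
    · exact h
    · exact absurd (Subring.mem_bot.mpr ⟨⌊c i⌋, h⟩) (hcint i hi)
  have hfl' : ∀ i, c i < (⌊c i⌋ : ℝ) + 1 := fun i => Int.lt_floor_add_one _
  set b : Fin k → ℝ := fun i =>
    if 0 < δ i then ((⌊c i⌋:ℝ) + 1 - c i) / δ i else ((⌊c i⌋:ℝ) - c i) / δ i with hbdef
  have hbpos : ∀ i ∈ Fδ, 0 < b i := by
    intro i hi
    have hδi : δ i ≠ 0 := by simpa [hFδ] using hi
    rcases lt_trichotomy (δ i) 0 with h | h | h
    · have : b i = ((⌊c i⌋:ℝ) - c i) / δ i := if_neg (by linarith)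
      rw [this]
      exact div_pos_iff.mpr (Or.inr ⟨by linarith [hfl i hi], h⟩)
    · exact absurd h hδi
    · have : b i = ((⌊c i⌋:ℝ) + 1 - c i) / δ i := if_pos h
      rw [this]
      exact div_pos (by linarith [hfl' i]) h
  set t : ℝ := Fδ.inf' hFδne b with ht
  have htpos : 0 < t := by
    rw [ht, Finset.lt_inf'_iff]
    exact hbpos
  set c₂ : Fin k → ℝ := fun i => c i + t * δ i with hc₂
  -- bounds for perturbed coefficients
  have hbounds : ∀ i ∈ Fδ, (⌊c i⌋ : ℝ) ≤ c₂ i ∧ c₂ i ≤ (⌊c i⌋ : ℝ) + 1 := by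
    intro i hi
    have hδi : δ i ≠ 0 := by simpa [hFδ] using hi
    have hti := Finset.inf'_le b hi
    rw [← ht] at hti
    rcases lt_trichotomy (δ i) 0 with h | h | h
    · have hbi : b i = ((⌊c i⌋:ℝ) - c i) / δ i := if_neg (by linarith)
      rw [hbi] at hti
      have h1 : (⌊c i⌋:ℝ) - c i ≤ t * δ i := by
        rw [le_div_iff_of_neg h] at hti
        linarith [hti]
      constructor
      · simp only [hc₂]; linarith
      · have : t * δ i < 0 := mul_neg_of_pos_of_neg htpos h
        simp only [hc₂]; linarith [hfl' i]
    · exact absurd h hδi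
    · have hbi : b i = ((⌊c i⌋:ℝ) + 1 - c i) / δ i := if_pos h
      rw [hbi] at hti
      have h1 : t * δ i ≤ (⌊c i⌋:ℝ) + 1 - c i := by
        rw [le_div_iff₀ h] at hti
        linarith
      constructor
      · have : 0 < t * δ i := mul_pos htpos h
        simp only [hc₂]; linarith [hfl i hi]
      · simp only [hc₂]; linarith
  -- absolute values are given by the sign s
  have habs : ∀ i ∈ Fδ, |c₂ i| = s i * c₂ i ∧ |c i| = s i * c i := by
    intro i hi
    have hb := hbounds i hi
    have hcne : c i ≠ 0 := fun h => hcint i hi (by rw [h]; exact zero_mem _)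
    rcases lt_or_gt_of_ne hcne with h | h
    · have hsi : s i = -1 := if_neg (by linarith)
      have hfneg : (⌊c i⌋ : ℝ) + 1 ≤ 0 := by
        have h1 : (⌊c i⌋:ℝ) < 0 := lt_of_le_of_lt (Int.floor_le (c i)) h
        have h2 : ⌊c i⌋ < 0 := by exact_mod_cast h1
        have h3 : ⌊c i⌋ + 1 ≤ 0 := by omega
        exact_mod_cast h3
      constructor
      · rw [hsi, abs_of_nonpos (by linarith [hb.2]), neg_one_mul]
      · rw [hsi, abs_of_nonpos (by linarith), neg_one_mul]
    · have hsi : s i = 1 := if_pos h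
      have hfpos : 0 ≤ (⌊c i⌋ : ℝ) := by
        have : (0:ℤ) ≤ ⌊c i⌋ := Int.floor_nonneg.mpr h.le
        exact_mod_cast this
      constructor
      · rw [hsi, abs_of_nonneg (by linarith [hb.1]), one_mul]
      · rw [hsi, abs_of_nonneg h.le, one_mul]
  -- cost estimate
  have hcost : ∑ i, |c₂ i| * dist (x i) (y i)
      = ∑ i, |c i| * dist (x i) (y i) + t * ∑ i, s i * δ i * dist (x i) (y i) := by
    rw [Finset.mul_sum, ← Finset.sum_add_distrib]
    refine Finset.sum_congr rfl fun i _ => ?_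
    by_cases hi : i ∈ Fδ
    · obtain ⟨h1, h2⟩ := habs i hi
      rw [h1, h2]
      simp only [hc₂]
      ring
    · have hδi : δ i = 0 := by
        by_contra h
        exact hi (by simp [hFδ, h])
      simp only [hc₂, hδi]
      ring_nf
  -- the new coefficient at the minimizer is an integer
  obtain ⟨i₀, hi₀, hti₀⟩ := Finset.exists_mem_eq_inf' hFδne b
  have hδi₀ : δ i₀ ≠ 0 := by simpa [hFδ] using hi₀
  have hint : c₂ i₀ ∈ (⊥ : Subring ℝ) := by
    simp only [hc₂]
    rw [ht, hti₀]
    by_cases h : 0 < δ i₀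
    · have hbi : b i₀ = ((⌊c i₀⌋:ℝ) + 1 - c i₀) / δ i₀ := if_pos h
      rw [hbi, div_mul_cancel₀ _ hδi₀]
      exact Subring.mem_bot.mpr ⟨⌊c i₀⌋ + 1, by push_cast; ring⟩
    · have hbi : b i₀ = ((⌊c i₀⌋:ℝ) - c i₀) / δ i₀ := if_neg h
      rw [hbi, div_mul_cancel₀ _ hδi₀]
      exact Subring.mem_bot.mpr ⟨⌊c i₀⌋, by push_cast; ring⟩
  refine ⟨c₂, ?_, ?_, ?_⟩
  · -- constraint preserved
    have : ∀ i, c₂ i • (Finsupp.single (x i) (1:ℝ) - Finsupp.single (y i) 1)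
        = c i • (Finsupp.single (x i) (1:ℝ) - Finsupp.single (y i) 1)
          + t • (δ i • (Finsupp.single (x i) (1:ℝ) - Finsupp.single (y i) 1)) := by
      intro i
      simp only [hc₂, add_smul, smul_smul]
    rw [Finset.sum_congr rfl (fun i _ => this i), Finset.sum_add_distrib,
      ← Finset.smul_sum, hδ0, smul_zero, add_zero]
  · rw [hcost]
    nlinarith [htpos, hA]
  · apply lt_of_le_of_lt (Finset.card_le_card ?_)
      (Finset.card_erase_lt_of_mem (a := i₀) ?_)
    · intro j hj
      simp only [Finset.mem_filter, Finset.mem_univ, true_and] at hj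
      rw [Finset.mem_erase]
      constructor
      · rintro rfl; exact hj hint
      · simp only [Finset.mem_filter, Finset.mem_univ, true_and]
        intro hcj
        have hδj : δ j = 0 := hsupp j hcj
        apply hj
        simp only [hc₂, hδj, mul_zero, add_zero]
        exact hcj
    · simp only [Finset.mem_filter, Finset.mem_univ, true_and]
      exact hcint i₀ hi₀

lemma allInt {k : ℕ} (v : X →₀ ℤ) (c : Fin k → ℝ) (x y : Fin k → X)
    (hall : ∀ i, c i ∈ (⊥ : Subring ℝ))
    (hc : v.mapRange (fun z : ℤ => (z:ℝ)) Int.cast_zero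
       = ∑ i, c i • (Finsupp.single (x i) (1:ℝ) - Finsupp.single (y i) 1)) :
    ∃ m : Fin k → ℤ, v = ∑ i, m i • (Finsupp.single (x i) (1:ℤ) - Finsupp.single (y i) 1) ∧
      ∑ i, |(m i : ℝ)| * dist (x i) (y i) = ∑ i, |c i| * dist (x i) (y i) := by
  choose m hm using fun i => Subring.mem_bot.mp (hall i)
  refine ⟨m, ?_, ?_⟩
  · apply Finsupp.mapRange_injective (fun z : ℤ => (z:ℝ)) Int.cast_zero Int.cast_injective
    rw [hc, mapRange_rep]
    exact Finset.sum_congr rfl fun i _ => by rw [hm]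
  · exact Finset.sum_congr rfl fun i _ => by rw [hm]

lemma round_rep (v : X →₀ ℤ) (n : ℕ) :
    ∀ (k : ℕ) (c : Fin k → ℝ) (x y : Fin k → X),
    (Finset.univ.filter (fun i => c i ∉ (⊥ : Subring ℝ))).card ≤ n →
    v.mapRange (fun z : ℤ => (z:ℝ)) Int.cast_zero
       = ∑ i, c i • (Finsupp.single (x i) (1:ℝ) - Finsupp.single (y i) 1) →
    ∃ m : Fin k → ℤ, v = ∑ i, m i • (Finsupp.single (x i) (1:ℤ) - Finsupp.single (y i) 1) ∧
      ∑ i, |(m i : ℝ)| * dist (x i) (y i) ≤ ∑ i, |c i| * dist (x i) (y i) := by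
  induction n with
  | zero =>
    intro k c x y hcard hc
    have hall : ∀ i, c i ∈ (⊥ : Subring ℝ) := by
      intro i
      by_contra h
      have : i ∈ Finset.univ.filter (fun i => c i ∉ (⊥ : Subring ℝ)) := by simp [h]
      have := Finset.card_pos.mpr ⟨i, this⟩
      omega
    obtain ⟨m, h1, h2⟩ := allInt v c x y hall hc
    exact ⟨m, h1, h2.le⟩
  | succ n ih =>
    intro k c x y hcard hc
    set F : Finset (Fin k) := Finset.univ.filter (fun i => c i ∉ (⊥ : Subring ℝ)) with hF
    rcases Finset.eq_empty_or_nonempty F with hFe | hne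
    · have hall : ∀ i, c i ∈ (⊥ : Subring ℝ) := by
        intro i
        by_contra h
        have : i ∈ F := by simp [hF, h]
        rw [hFe] at this
        exact absurd this (Finset.notMem_empty i)
      obtain ⟨m, h1, h2⟩ := allInt v c x y hall hc
      exact ⟨m, h1, h2.le⟩
    · by_cases hdeg : ∃ i ∈ F, x i = y i
      · -- degenerate edge: zero out its coefficient
        obtain ⟨i, hiF, hxyi⟩ := hdeg
        set c₂ : Fin k → ℝ := Function.update c i 0 with hc₂
        have hterm : ∀ cc : ℝ, cc • (Finsupp.single (x i) (1:ℝ) - Finsupp.single (y i) 1) = 0 := by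
          intro cc; rw [hxyi, sub_self, smul_zero]
        have hsum : (∑ j, c₂ j • (Finsupp.single (x j) (1:ℝ) - Finsupp.single (y j) 1) : X →₀ ℝ)
            = ∑ j, c j • (Finsupp.single (x j) (1:ℝ) - Finsupp.single (y j) 1) := by
          rw [← Finset.add_sum_erase _ _ (Finset.mem_univ i),
            ← Finset.add_sum_erase _ (fun j => c j • (Finsupp.single (x j) (1:ℝ) - Finsupp.single (y j) 1)) (Finset.mem_univ i),
            hterm, hterm]
          congr 1
          refine Finset.sum_congr rfl fun j hj => ?_
          rw [hc₂, Function.update_of_ne (Finset.mem_erase.mp hj).1]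
        have hcost : ∑ j, |c₂ j| * dist (x j) (y j) = ∑ j, |c j| * dist (x j) (y j) := by
          rw [← Finset.add_sum_erase _ _ (Finset.mem_univ i),
            ← Finset.add_sum_erase _ (fun j => |c j| * dist (x j) (y j)) (Finset.mem_univ i)]
          have h1 : |c₂ i| * dist (x i) (y i) = 0 := by
            rw [hc₂, Function.update_self, abs_zero, zero_mul]
          have h2 : |c i| * dist (x i) (y i) = 0 := by
            rw [hxyi, dist_self, mul_zero]
          rw [h1, h2]
          congr 1
          refine Finset.sum_congr rfl fun j hj => ?_
          rw [hc₂, Function.update_of_ne (Finset.mem_erase.mp hj).1]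
        have hcard₂ : (Finset.univ.filter (fun j => c₂ j ∉ (⊥ : Subring ℝ))).card ≤ n := by
          have hsub : Finset.univ.filter (fun j => c₂ j ∉ (⊥ : Subring ℝ)) ⊆ F.erase i := by
            intro j hj
            simp only [Finset.mem_filter, Finset.mem_univ, true_and] at hj
            have hji : j ≠ i := by
              rintro rfl
              exact hj (by rw [hc₂, Function.update_self]; exact zero_mem _)
            rw [Finset.mem_erase]
            refine ⟨hji, ?_⟩
            simp only [hF, Finset.mem_filter, Finset.mem_univ, true_and]
            rwa [hc₂, Function.update_of_ne hji] at hj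
          have := Finset.card_le_card hsub
          have := Finset.card_erase_lt_of_mem hiF
          omega
        obtain ⟨m, h1, h2⟩ := ih k c₂ x y hcard₂ (hc.trans hsum.symm)
        exact ⟨m, h1, h2.trans (le_of_eq hcost)⟩
      · push_neg at hdeg
        -- nondegenerate: find a dependency among the fractional edges
        have hnotind : ¬ LinearIndependent ℝ
            (fun j : F => (Finsupp.single (x j) (1:ℝ) - Finsupp.single (y j) 1)) := by
          intro hind
          obtain ⟨i₀, hi₀F, p, hi₀p, hleaf⟩ := exists_leaf x y F hne hdeg hind
          set e : Fin k → ℝ :=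
            fun i => (if x i = p then (1:ℝ) else 0) - (if y i = p then 1 else 0) with he
          have heint : ∀ i, e i ∈ (⊥ : Subring ℝ) := by
            intro i
            refine sub_mem ?_ ?_ <;> · split <;> [exact one_mem _; exact zero_mem _]
          have hvp : ((v p : ℤ) : ℝ) = ∑ i, c i * e i := by
            have := congrArg (fun f : X →₀ ℝ => f p) hc
            simpa [Finsupp.mapRange_apply, sum_rep_apply] using this
          have hsplit : ∑ i, c i * e i = c i₀ * e i₀ + ∑ i ∈ Finset.univ.erase i₀, c i * e i :=
            (Finset.add_sum_erase _ _ (Finset.mem_univ i₀)).symm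
          have herase : ∑ i ∈ Finset.univ.erase i₀, c i * e i ∈ (⊥ : Subring ℝ) := by
            refine sum_mem fun j hj => ?_
            by_cases hjF : j ∈ F
            · have hjne : j ≠ i₀ := (Finset.mem_erase.mp hj).1
              have : ¬ (x j = p ∨ y j = p) := fun h => hjne (hleaf j hjF h)
              push_neg at this
              have : e j = 0 := by simp [he, this.1, this.2]
              rw [this, mul_zero]
              exact zero_mem _
            · have : c j ∈ (⊥ : Subring ℝ) := by
                by_contra h
                exact hjF (by simp [hF, h])
              exact mul_mem this (heint j)
          have hprod : c i₀ * e i₀ ∈ (⊥ : Subring ℝ) := by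
            have : c i₀ * e i₀ = ((v p : ℤ) : ℝ) - ∑ i ∈ Finset.univ.erase i₀, c i * e i := by
              rw [hvp, hsplit]; ring
            rw [this]
            exact sub_mem (Subring.mem_bot.mpr ⟨v p, rfl⟩) herase
          have hci₀ : c i₀ ∈ (⊥ : Subring ℝ) := by
            rcases hi₀p with hxp | hyp
            · have hyne : ¬ y i₀ = p := by
                intro h; exact hdeg i₀ hi₀F (hxp.trans h.symm)
              have : e i₀ = 1 := by simp [he, hxp, hyne]
              rwa [this, mul_one] at hprod
            · have hxne : ¬ x i₀ = p := by
                intro h; exact hdeg i₀ hi₀F (h.trans hyp.symm)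
              have : e i₀ = -1 := by simp [he, hxne, hyp]
              rw [this] at hprod
              have : c i₀ = -(c i₀ * (-1)) := by ring
              rw [this]
              exact neg_mem hprod
          have : i₀ ∈ F := hi₀F
          simp only [hF, Finset.mem_filter, Finset.mem_univ, true_and] at this
          exact this hci₀
        obtain ⟨g, hg0, j₀, hj₀⟩ := Fintype.not_linearIndependent_iff.mp hnotind
        set δ : Fin k → ℝ := fun i => if h : i ∈ F then g ⟨i, h⟩ else 0 with hδ
        have hδF : ∀ (j : F), δ (j : Fin k) = g j := by
          intro j
          simp only [hδ, dif_pos j.2]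
        have hδsupp : ∀ i, c i ∈ (⊥ : Subring ℝ) → δ i = 0 := by
          intro i h
          refine dif_neg ?_
          simp [hF, h]
        have hδne : ∃ i, δ i ≠ 0 := ⟨j₀, by rw [hδF j₀]; exact hj₀⟩
        have hδ0 : (∑ i, δ i • (Finsupp.single (x i) (1:ℝ) - Finsupp.single (y i) 1) : X →₀ ℝ)
            = 0 := by
          rw [← Finset.sum_subset (Finset.subset_univ F)
            (fun i _ hi => by rw [show δ i = 0 from dif_neg hi, zero_smul])]
          rw [← Finset.sum_attach F (fun i => δ i • (Finsupp.single (x i) (1:ℝ) - Finsupp.single (y i) 1))]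
          rw [← hg0, ← Finset.univ_eq_attach]
          exact Finset.sum_congr rfl fun j _ => by rw [hδF j]
        set A : ℝ := ∑ i, (if 0 < c i then (1:ℝ) else -1) * δ i * dist (x i) (y i) with hA
        rcases le_or_gt A 0 with hA0 | hA0
        · obtain ⟨c₂, hsum, hcost, hlt⟩ := perturb c δ x y hδsupp hδne hδ0 hA0
          have hcard₂ : (Finset.univ.filter (fun j => c₂ j ∉ (⊥ : Subring ℝ))).card ≤ n := by
            have hFc : F.card = (Finset.univ.filter (fun i => c i ∉ (⊥ : Subring ℝ))).card := rfl
            omega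
          obtain ⟨m, h1, h2⟩ := ih k c₂ x y hcard₂ (hc.trans hsum.symm)
          exact ⟨m, h1, h2.trans hcost⟩
        · have hδne' : ∃ i, (-δ) i ≠ 0 := by
            obtain ⟨i, hi⟩ := hδne; exact ⟨i, by simpa using hi⟩
          have hδsupp' : ∀ i, c i ∈ (⊥ : Subring ℝ) → (-δ) i = 0 := by
            intro i h; simp [hδsupp i h]
          have hδ0' : (∑ i, (-δ) i • (Finsupp.single (x i) (1:ℝ) - Finsupp.single (y i) 1) : X →₀ ℝ)
              = 0 := by
            have : ∀ i, (-δ) i • (Finsupp.single (x i) (1:ℝ) - Finsupp.single (y i) 1)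
                = -(δ i • (Finsupp.single (x i) (1:ℝ) - Finsupp.single (y i) 1)) := by
              intro i; simp [neg_smul]
            rw [Finset.sum_congr rfl fun i _ => this i, Finset.sum_neg_distrib, hδ0, neg_zero]
          have hA0' : ∑ i, (if 0 < c i then (1:ℝ) else -1) * (-δ) i * dist (x i) (y i) ≤ 0 := by
            have : ∑ i, (if 0 < c i then (1:ℝ) else -1) * (-δ) i * dist (x i) (y i) = -A := by
              rw [hA, ← Finset.sum_neg_distrib]
              exact Finset.sum_congr rfl fun i _ => by simp only [Pi.neg_apply]; ring
            rw [this]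
            linarith
          obtain ⟨c₂, hsum, hcost, hlt⟩ := perturb c (-δ) x y hδsupp' hδne' hδ0' hA0'
          have hcard₂ : (Finset.univ.filter (fun j => c₂ j ∉ (⊥ : Subring ℝ))).card ≤ n := by
            have hFc : F.card = (Finset.univ.filter (fun i => c i ∉ (⊥ : Subring ℝ))).card := rfl
            omega
          obtain ⟨m, h1, h2⟩ := ih k c₂ x y hcard₂ (hc.trans hsum.symm)
          exact ⟨m, h1, h2.trans hcost⟩





end GraevAux

end GraevAux

/-- For an element of the free abelian group with coefficient sum zero, the Graev
seminorm computed over integer-coefficient representations equals the infimum computed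
over real-coefficient representations. -/
theorem graevSeminorm_eq_graevSeminormReal {X : Type*} [PseudoMetricSpace X]
    (v : X →₀ ℤ) (hv : v.sum (fun _ c => c) = 0) :
    graevSeminorm v =
      graevSeminormReal (X := X) (v.mapRange (fun z : ℤ => (z : ℝ)) Int.cast_zero) := by
  classical
  set w := v.mapRange (fun z : ℤ => (z : ℝ)) Int.cast_zero with hw
  set S : Set ℝ := { r : ℝ | ∃ (k : ℕ) (c : Fin k → ℤ) (x y : Fin k → X),
    v = ∑ i, c i • (Finsupp.single (x i) (1 : ℤ) - Finsupp.single (y i) (1 : ℤ)) ∧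
    r = ∑ i, |(c i : ℝ)| * dist (x i) (y i) } with hS
  set T : Set ℝ := { r : ℝ | ∃ (k : ℕ) (c : Fin k → ℝ) (x y : Fin k → X),
    w = ∑ i, c i • (Finsupp.single (x i) (1 : ℝ) - Finsupp.single (y i) (1 : ℝ)) ∧
    r = ∑ i, |c i| * dist (x i) (y i) } with hT
  have hSnonneg : ∀ r ∈ S, (0:ℝ) ≤ r := by
    rintro r ⟨k, c, x, y, -, rfl⟩
    exact Finset.sum_nonneg fun i _ => mul_nonneg (abs_nonneg _) dist_nonneg
  have hTnonneg : ∀ r ∈ T, (0:ℝ) ≤ r := by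
    rintro r ⟨k, c, x, y, -, rfl⟩
    exact Finset.sum_nonneg fun i _ => mul_nonneg (abs_nonneg _) dist_nonneg
  have hST : S ⊆ T := by
    rintro r ⟨k, c, x, y, hrep, hcost⟩
    refine ⟨k, fun i => (c i : ℝ), x, y, ?_, ?_⟩
    · rw [hw, hrep, GraevAux.mapRange_rep]
    · exact hcost
  have hSne : S.Nonempty := by
    by_cases hv0 : v = 0
    · refine ⟨0, 0, Fin.elim0, Fin.elim0, Fin.elim0, by simp [hv0], by simp⟩
    · have hsupp : v.support.Nonempty := Finsupp.support_nonempty_iff.mpr hv0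
      obtain ⟨b, hb⟩ := hsupp
      set n := v.support.card with hn
      set e : ↥v.support ≃ Fin n := (Fintype.equivFinOfCardEq (by simp [hn])) with he
      refine ⟨_, n, fun i => v ((e.symm i : ↥v.support) : X),
        fun i => ((e.symm i : ↥v.support) : X), fun _ => b, ?_, rfl⟩
      have h1 : ∑ i : Fin n, v ((e.symm i : ↥v.support) : X) •
            (Finsupp.single ((e.symm i : ↥v.support) : X) (1:ℤ) - Finsupp.single b 1)
          = ∑ a : ↥v.support, v (a : X) •
            (Finsupp.single (a : X) (1:ℤ) - Finsupp.single b 1) :=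
        Equiv.sum_comp e.symm (fun a : ↥v.support => v (a:X) • (Finsupp.single (a:X) (1:ℤ) - Finsupp.single b 1))
      rw [h1]
      have h2 : ∀ a : ↥v.support, v (a : X) •
            (Finsupp.single (a : X) (1:ℤ) - Finsupp.single b 1)
          = Finsupp.single (a : X) (v (a : X)) - Finsupp.single b (v (a : X)) := by
        intro a
        rw [smul_sub, Finsupp.smul_single, Finsupp.smul_single]
        simp
      rw [Finset.sum_congr rfl fun a _ => h2 a, Finset.sum_sub_distrib]
      have h3 : ∑ a : ↥v.support, Finsupp.single (a : X) (v (a : X)) = v := by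
        rw [Finset.sum_coe_sort v.support (fun a => Finsupp.single a (v a))]
        exact Finsupp.sum_single v
      have h4 : ∑ a : ↥v.support, Finsupp.single b (v (a : X)) = 0 := by
        rw [← Finsupp.single_finset_sum]
        rw [Finset.sum_coe_sort v.support (fun a => v a)]
        have : ∑ a ∈ v.support, v a = 0 := hv
        rw [this, Finsupp.single_zero]
      rw [h3, h4, sub_zero]
  have hTne : T.Nonempty := hSne.mono hST |>.mono (fun a ha => ha) |>.imp fun _ h => h
  have hTbdd : BddBelow T := ⟨0, fun r hr => hTnonneg r hr⟩
  have hSbdd : BddBelow S := ⟨0, fun r hr => hSnonneg r hr⟩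
  have hge : graevSeminormReal w ≤ graevSeminorm v := csInf_le_csInf hTbdd hSne hST
  have hle : graevSeminorm v ≤ graevSeminormReal w := by
    refine le_csInf hTne ?_
    rintro r ⟨k, c, x, y, hrep, hcost⟩
    obtain ⟨m, hm1, hm2⟩ := GraevAux.round_rep v
      (Finset.univ.filter (fun i => c i ∉ (⊥ : Subring ℝ))).card k c x y le_rfl hrep
    calc graevSeminorm v ≤ ∑ i, |(m i : ℝ)| * dist (x i) (y i) :=
          csInf_le hSbdd ⟨k, m, x, y, hm1, rfl⟩
    _ ≤ ∑ i, |c i| * dist (x i) (y i) := hm2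
    _ = r := hcost.symm
  exact le_antisymm hle hge
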